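/- Let (H, H⁺) be a torsion-free partially ordered abelian group and let N ⊆ H be an additive submonoid with N ∩ (−N) = {0} and N ∩ H⁺ = {0}. Then for every x ∈ H with x ≠ 0, there do not simultaneously exist integers n₁ ≥ 1 and n₂ ≤ −1 and elements a, b ∈ N such that a + n₁·x ∈ H⁺ and b + n₂·x ∈ H⁺. -/
import Mathlib

lemma nsmul_mem_aux {H : Type*} [AddCommGroup H] (S : Set H)
    (h0 : (0 : H) ∈ S) (hadd : ∀ a ∈ S, ∀ b ∈ S, a + b ∈ S) :
    ∀ n : ℕ, ∀ a ∈ S, n • a ∈ S := by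
  intro n a ha
  induction n with
  | zero => simpa using h0
  | succ k ih => rw [succ_nsmul]; exact hadd _ ih _ ha

/-- Claim 3 in Proposition 5.5: well-definedness of the sign function. -/
theorem stmt_11 {H : Type*} [AddCommGroup H]
    (Hpos : Set H)
    (hzero : (0 : H) ∈ Hpos)
    (hadd : ∀ a ∈ Hpos, ∀ b ∈ Hpos, a + b ∈ Hpos)
    (hpointed : ∀ a : H, a ∈ Hpos → -a ∈ Hpos → a = 0)
    (htf : ∀ n : ℕ, 1 ≤ n → ∀ x : H, n • x = 0 → x = 0)
    (N : Set H)
    (hN0 : (0 : H) ∈ N)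
    (hNadd : ∀ a ∈ N, ∀ b ∈ N, a + b ∈ N)
    (hNN : ∀ a ∈ N, -a ∈ N → a = 0)
    (hNpos : ∀ a ∈ N, a ∈ Hpos → a = 0) :
    ∀ x : H, x ≠ 0 →
      ¬ ∃ (n₁ n₂ : ℤ) (a b : H), 1 ≤ n₁ ∧ n₂ ≤ -1 ∧ a ∈ N ∧ b ∈ N ∧
        a + n₁ • x ∈ Hpos ∧ b + n₂ • x ∈ Hpos := by
  rintro x hx ⟨n₁, n₂, a, b, h1, h2, haN, hbN, hpa, hpb⟩
  set m₁ : ℕ := n₁.toNat with hm₁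
  set m₂ : ℕ := (-n₂).toNat with hm₂
  have hm₁1 : 1 ≤ m₁ := by omega
  have hm₂1 : 1 ≤ m₂ := by omega
  have e1 : n₁ • x = (m₁ : ℕ) • x := by
    rw [← natCast_zsmul]; congr 1; omega
  have e2 : n₂ • x = -((m₂ : ℕ) • x) := by
    rw [← natCast_zsmul, ← neg_zsmul]; congr 1; omega
  rw [e1] at hpa
  rw [e2] at hpb
  -- the key combination
  have hc : m₂ • (a + m₁ • x) + m₁ • (b + -(m₂ • x)) = m₂ • a + m₁ • b := by
    simp only [smul_add, smul_neg, smul_smul]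
    rw [Nat.mul_comm m₁ m₂]
    abel
  have hcpos : m₂ • a + m₁ • b ∈ Hpos := by
    rw [← hc]
    exact hadd _ (nsmul_mem_aux Hpos hzero hadd _ _ hpa) _
      (nsmul_mem_aux Hpos hzero hadd _ _ hpb)
  have hcN : m₂ • a + m₁ • b ∈ N :=
    hNadd _ (nsmul_mem_aux N hN0 hNadd _ _ haN) _ (nsmul_mem_aux N hN0 hNadd _ _ hbN)
  have hc0 : m₂ • a + m₁ • b = 0 := hNpos _ hcN hcpos
  have hneg : -(m₂ • a) = m₁ • b := by
    rw [eq_comm, eq_neg_iff_add_eq_zero, add_comm]; exact hc0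
  have ha0 : a = 0 := by
    have : (m₂ • a : H) = 0 := by
      apply hNN _ (nsmul_mem_aux N hN0 hNadd _ _ haN)
      rw [hneg]; exact nsmul_mem_aux N hN0 hNadd _ _ hbN
    exact htf _ hm₂1 _ this
  have hb0 : b = 0 := by
    have : (m₁ • b : H) = 0 := by rw [← hneg, ha0, smul_zero, neg_zero]
    exact htf _ hm₁1 _ this
  rw [ha0, zero_add] at hpa
  rw [hb0, zero_add] at hpb
  have h3 : (m₂ * m₁) • x ∈ Hpos := by
    rw [← smul_smul]; exact nsmul_mem_aux Hpos hzero hadd _ _ hpa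
  have h4 : -((m₂ * m₁) • x) ∈ Hpos := by
    have := nsmul_mem_aux Hpos hzero hadd m₁ _ hpb
    rwa [smul_neg, smul_smul, Nat.mul_comm] at this
  exact hx (htf _ (Nat.one_le_iff_ne_zero.2 (Nat.mul_ne_zero (by omega) (by omega))) _ (hpointed _ h3 h4))
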